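/- Let n ≥ k ≥ 2 be positive integers with k ≡ 2 or 3 (mod 4), and let G be a simple graph on the vertex set [n]. Then Φ(G) = Σ_{a=0}^{C(k,2)−1} Σ_{b=0}^{k} (−1)^a · C(n−b, k−b) · φ(a,b;G). -/

import Mathlib

open Finset

lemma aux_supersets {α : Type*} [DecidableEq α] [Fintype α] (t : Finset α) (k : ℕ)
    (ht : t.card ≤ k) :
    (((univ : Finset α).powersetCard k).filter (fun S => t ⊆ S)).card
      = (Fintype.card α - t.card).choose (k - t.card) := by
  rw [← Finset.card_compl t, ← Finset.card_powersetCard (k - t.card) tᶜ]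
  apply Finset.card_nbij' (fun S => S \ t) (fun S => S ∪ t)
  · intro S hS
    simp only [mem_coe, mem_filter, mem_powersetCard] at hS
    obtain ⟨⟨-, hcard⟩, hts⟩ := hS
    rw [mem_coe, mem_powersetCard]
    constructor
    · intro x hx
      simp only [mem_sdiff] at hx
      simp [hx.2]
    · rw [card_sdiff_of_subset hts, hcard]
  · intro S hS
    rw [mem_coe, mem_powersetCard] at hS
    obtain ⟨hsub, hcard⟩ := hS
    have hdisj : Disjoint S t := by
      rw [Finset.disjoint_left]
      intro x hx hxt
      have := hsub hx
      simp [hxt] at this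
    simp only [mem_coe, mem_filter, mem_powersetCard]
    refine ⟨⟨subset_univ _, ?_⟩, subset_union_right⟩
    rw [card_union_of_disjoint hdisj, hcard]
    omega
  · intro S hS
    simp only [mem_coe, mem_filter] at hS
    exact sdiff_union_of_subset hS.2
  · intro S hS
    rw [mem_coe, mem_powersetCard] at hS
    have hdisj : Disjoint S t := by
      rw [Finset.disjoint_left]
      intro x hx hxt
      have := hS.1 hx
      simp [hxt] at this
    beta_reduce
    rw [union_sdiff_right, sdiff_eq_self_of_disjoint hdisj]

lemma aux_supersets_big {α : Type*} [DecidableEq α] [Fintype α] (t : Finset α) (k : ℕ)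
    (ht : k < t.card) :
    (((univ : Finset α).powersetCard k).filter (fun S => t ⊆ S)).card = 0 := by
  rw [Finset.card_eq_zero, Finset.filter_eq_empty_iff]
  intro S hS hts
  rw [mem_powersetCard] at hS
  have := Finset.card_le_card hts
  omega


lemma aux_fiber {α : Type*} (s : Finset α) [DecidableEq α] (f g : α → ℕ) (A B : ℕ)
    (w : ℕ → ℕ → ℤ) :
    ∑ a ∈ range A, ∑ b ∈ range B,
        w a b * (((s.filter fun x => f x = a ∧ g x = b)).card : ℤ)
      = ∑ x ∈ s.filter (fun x => f x < A ∧ g x < B), w (f x) (g x) := by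
  rw [Finset.sum_filter]
  simp only [Finset.card_filter]
  push_cast
  simp only [Finset.mul_sum]
  rw [show (∑ a ∈ range A, ∑ b ∈ range B, ∑ x ∈ s,
        w a b * (if f x = a ∧ g x = b then (1:ℤ) else 0))
      = ∑ x ∈ s, ∑ a ∈ range A, ∑ b ∈ range B,
        w a b * (if f x = a ∧ g x = b then (1:ℤ) else 0) from
    (Finset.sum_congr rfl fun a _ => Finset.sum_comm).trans Finset.sum_comm]
  apply Finset.sum_congr rfl
  intro x _
  have h1 : ∀ a ∈ range A, (∑ b ∈ range B,
      w a b * (if f x = a ∧ g x = b then (1:ℤ) else 0))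
      = if f x = a then (if g x < B then w a (g x) else 0) else 0 := by
    intro a _
    by_cases h : f x = a
    · simp only [h, true_and, if_true, mul_ite, mul_one, mul_zero]
      rw [Finset.sum_ite_eq (range B) (g x) (w a)]
      simp [Finset.mem_range]
    · simp [h]
  rw [Finset.sum_congr rfl h1, Finset.sum_ite_eq (range A) (f x)
    (fun a => if g x < B then w a (g x) else 0)]
  simp only [Finset.mem_range]
  by_cases hA : f x < A <;> by_cases hB : g x < B <;> simp [hA, hB]

lemma aux_offdiag_card {α : Type*} [DecidableEq α] (S : Finset α) :
    (S.sym2.filter (fun e => ¬ e.IsDiag)).card = S.card.choose 2 := by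
  have hdiag : S.sym2.filter (fun e => e.IsDiag) = S.image Sym2.diag := by
    ext e
    induction e with
    | _ u v =>
      simp only [mem_filter, Finset.mem_sym2_iff, Finset.mem_image]
      constructor
      · rintro ⟨hmem, hd⟩
        have huv : u = v := hd
        exact ⟨u, hmem u (by simp), by simp [Sym2.diag, huv]⟩
      · rintro ⟨a, ha, heq⟩
        rw [← heq]
        refine ⟨?_, Sym2.diag_isDiag a⟩
        intro b hb
        have : b = a := by simpa [Sym2.diag, Sym2.mem_iff] using hb
        exact this ▸ ha
  have hsplit := Finset.card_filter_add_card_filter_not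
    (s := S.sym2) (p := fun e => e.IsDiag)
  rw [hdiag, Finset.card_image_of_injective _ Sym2.diag_injective,
    Finset.card_sym2] at hsplit
  have : (S.card + 1).choose 2 = S.card + S.card.choose 2 := by
    rw [Nat.choose_succ_succ, Nat.choose_one_right]
  omega

lemma aux_altsum {β : Type*} [DecidableEq β] (m : Finset β) (C : ℕ) (hC : Odd C)
    (hm : m.card ≤ C) :
    ∑ F ∈ m.powerset.filter (fun F => F.card < C), (-1 : ℤ) ^ F.card
      = (if m = ∅ then 1 else 0) + (if m.card = C then 1 else 0) := by
  have hsplit := Finset.sum_filter_add_sum_filter_not m.powerset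
    (fun F => F.card < C) (fun F => (-1 : ℤ) ^ F.card)
  rw [Finset.sum_powerset_neg_one_pow_card] at hsplit
  have hne : m.powerset.filter (fun F => ¬ F.card < C) = m.powersetCard C := by
    rw [Finset.powersetCard_eq_filter]
    apply Finset.filter_congr
    intro F hF
    rw [Finset.mem_powerset] at hF
    have := Finset.card_le_card hF
    constructor <;> intro h <;> omega
  rw [hne] at hsplit
  have h2 : ∑ F ∈ m.powersetCard C, (-1 : ℤ) ^ F.card
      = (m.card.choose C : ℤ) * (-1) ^ C := by
    rw [Finset.sum_congr rfl (fun F hF => by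
      rw [(Finset.mem_powersetCard.1 hF).2]), Finset.sum_const,
      Finset.card_powersetCard, nsmul_eq_mul]
  rw [h2, hC.neg_one_pow] at hsplit
  have h3 : (m.card.choose C : ℤ) = if m.card = C then 1 else 0 := by
    rcases eq_or_lt_of_le hm with h | h
    · simp [h, Nat.choose_self]
    · rw [if_neg (by omega : ¬ m.card = C), Nat.choose_eq_zero_of_lt h]
      simp
  rw [h3] at hsplit
  have h4 : (if m = ∅ then (1:ℤ) else 0) = if m.card = 0 then 1 else 0 := by
    simp [Finset.card_eq_zero]
  linarith

lemma aux_odd (k : ℕ) (h : k % 4 = 2 ∨ k % 4 = 3) : Odd (k.choose 2) := by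
  rcases h with h | h
  · obtain ⟨q, rfl⟩ : ∃ q, k = 4 * q + 2 := ⟨k / 4, by omega⟩
    have hs : 4 * q + 2 - 1 = 4 * q + 1 := by omega
    have hprod : (4 * q + 2) * (4 * q + 1) = 2 * ((2 * q + 1) * (4 * q + 1)) := by ring
    rw [Nat.choose_two_right, hs, hprod, Nat.mul_div_cancel_left _ (by norm_num)]
    exact Odd.mul ⟨q, by ring⟩ ⟨2 * q, by ring⟩
  · obtain ⟨q, rfl⟩ : ∃ q, k = 4 * q + 3 := ⟨k / 4, by omega⟩
    have hs : 4 * q + 3 - 1 = 4 * q + 2 := by omega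
    have hprod : (4 * q + 3) * (4 * q + 2) = 2 * ((4 * q + 3) * (2 * q + 1)) := by ring
    rw [Nat.choose_two_right, hs, hprod, Nat.mul_div_cancel_left _ (by norm_num)]
    exact Odd.mul ⟨2 * q + 1, by ring⟩ ⟨q, by ring⟩

theorem stmt_17 (n k : ℕ) (hk : 2 ≤ k) (hkn : k ≤ n)
    (hkmod : k % 4 = 2 ∨ k % 4 = 3)
    (G : SimpleGraph (Fin n)) [DecidableRel G.Adj] :
    -- `Φ(G)`: the number of `k`-element subsets inducing a clique or an anticlique
    ((((Finset.powersetCard k (Finset.univ : Finset (Fin n))).filter fun S =>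
        (∀ u ∈ S, ∀ v ∈ S, u ≠ v → G.Adj u v) ∨ (∀ u ∈ S, ∀ v ∈ S, ¬ G.Adj u v)).card : ℤ)) =
      ∑ a ∈ Finset.range (k.choose 2), ∑ b ∈ Finset.range (k + 1),
        (-1 : ℤ) ^ a * ((n - b).choose (k - b) : ℤ) *
          -- `φ(a,b;G)`: the number of subgraphs `H` of `G` (given by an edge set
          -- `F ⊆ E(G)`) with `a` edges and exactly `b` effective vertices
          ((G.edgeFinset.powerset.filter fun F =>
            F.card = a ∧
              ((Finset.univ : Finset (Fin n)).filter fun v => ∃ e ∈ F, v ∈ e).card = b).card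
            : ℤ) := by
  classical
  set C := k.choose 2 with hC
  have hCodd : Odd C := aux_odd k hkmod
  have hCpos : 0 < C := hCodd.pos
  -- effective vertex set of F
  set eff : Finset (Sym2 (Fin n)) → Finset (Fin n) :=
    fun F => (Finset.univ : Finset (Fin n)).filter fun v => ∃ e ∈ F, v ∈ e with heff
  -- edges of G inside S
  set ein : Finset (Fin n) → Finset (Sym2 (Fin n)) :=
    fun S => G.edgeFinset.filter fun e => ∀ v ∈ e, v ∈ S with hein
  -- Step 1: RHS as a sum over subgraphs F
  rw [aux_fiber G.edgeFinset.powerset (fun F => F.card) (fun F => (eff F).card) C (k + 1)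
    (fun a b => (-1 : ℤ) ^ a * ((n - b).choose (k - b) : ℤ))]
  -- Step 2: replace the binomial by a superset count
  have hstep2 : ∀ F ∈ G.edgeFinset.powerset.filter
      (fun F => F.card < C ∧ (eff F).card < k + 1),
      (-1 : ℤ) ^ F.card * ((n - (eff F).card).choose (k - (eff F).card) : ℤ)
        = (-1 : ℤ) ^ F.card *
          ((((Finset.univ : Finset (Fin n)).powersetCard k).filter
            (fun S => eff F ⊆ S)).card : ℤ) := by
    intro F hF
    rw [Finset.mem_filter] at hF
    rw [aux_supersets (eff F) k (by omega), Fintype.card_fin]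
  rw [Finset.sum_congr rfl hstep2]
  -- Step 3: drop the condition (eff F).card < k + 1
  have hstep3 : ∑ F ∈ G.edgeFinset.powerset.filter
      (fun F => F.card < C ∧ (eff F).card < k + 1),
      (-1 : ℤ) ^ F.card *
        ((((Finset.univ : Finset (Fin n)).powersetCard k).filter
          (fun S => eff F ⊆ S)).card : ℤ)
      = ∑ F ∈ G.edgeFinset.powerset.filter (fun F => F.card < C),
      (-1 : ℤ) ^ F.card *
        ((((Finset.univ : Finset (Fin n)).powersetCard k).filter
          (fun S => eff F ⊆ S)).card : ℤ) := by
    apply Finset.sum_subset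
    · intro F hF
      rw [Finset.mem_filter] at hF ⊢
      exact ⟨hF.1, hF.2.1⟩
    · intro F hF hF2
      rw [Finset.mem_filter] at hF hF2
      have hbig : k < (eff F).card := by
        by_contra hle
        exact hF2 ⟨hF.1, hF.2, by omega⟩
      rw [aux_supersets_big (eff F) k hbig]
      simp
  rw [hstep3]
  -- Step 4: expand the superset count as a sum over S and swap sums
  have hstep4 : ∑ F ∈ G.edgeFinset.powerset.filter (fun F => F.card < C),
      (-1 : ℤ) ^ F.card *
        ((((Finset.univ : Finset (Fin n)).powersetCard k).filter
          (fun S => eff F ⊆ S)).card : ℤ)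
      = ∑ S ∈ (Finset.univ : Finset (Fin n)).powersetCard k,
          ∑ F ∈ G.edgeFinset.powerset.filter (fun F => F.card < C),
            (if eff F ⊆ S then (-1 : ℤ) ^ F.card else 0) := by
    rw [Finset.sum_comm]
    apply Finset.sum_congr rfl
    intro F _
    rw [Finset.card_filter]
    push_cast
    rw [Finset.mul_sum]
    apply Finset.sum_congr rfl
    intro S _
    by_cases h : eff F ⊆ S <;> simp [h]
  rw [hstep4]
  -- Step 5: LHS as a sum over S
  rw [Finset.card_filter]
  push_cast
  apply Finset.sum_congr rfl
  intro S hS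
  have hScard : S.card = k := (Finset.mem_powersetCard.1 hS).2
  -- inner sum over F: reduce to subsets of (ein S)
  have hFiff : ∀ F : Finset (Sym2 (Fin n)), (F ⊆ G.edgeFinset ∧ eff F ⊆ S) ↔ F ⊆ ein S := by
    intro F
    constructor
    · rintro ⟨hFE, hFS⟩ e he
      simp only [hein, Finset.mem_filter]
      refine ⟨hFE he, fun v hv => hFS ?_⟩
      simp only [heff, Finset.mem_filter, Finset.mem_univ, true_and]
      exact ⟨e, he, hv⟩
    · intro hFE
      constructor
      · intro e he
        have h := hFE he
        simp only [hein, Finset.mem_filter] at h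
        exact h.1
      · intro v hv
        simp only [heff, Finset.mem_filter, Finset.mem_univ, true_and] at hv
        obtain ⟨e, he, hve⟩ := hv
        have h := hFE he
        simp only [hein, Finset.mem_filter] at h
        exact h.2 v hve
  have h5 : ∑ F ∈ G.edgeFinset.powerset.filter (fun F => F.card < C),
      (if eff F ⊆ S then (-1 : ℤ) ^ F.card else 0)
      = ∑ F ∈ (ein S).powerset.filter (fun F => F.card < C), (-1 : ℤ) ^ F.card := by
    rw [← Finset.sum_filter]
    apply Finset.sum_congr _ (fun _ _ => rfl)
    ext F
    simp only [Finset.mem_filter, Finset.mem_powerset]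
    constructor
    · rintro ⟨⟨h1, h2⟩, h3⟩
      exact ⟨(hFiff F).1 ⟨h1, h3⟩, h2⟩
    · rintro ⟨h1, h2⟩
      exact ⟨⟨((hFiff F).2 h1).1, h2⟩, ((hFiff F).2 h1).2⟩
  rw [h5]
  -- edges inside S are contained in the off-diagonal pairs of S
  have hsub : ein S ⊆ S.sym2.filter (fun e => ¬ e.IsDiag) := by
    intro e he
    rw [hein, Finset.mem_filter] at he
    rw [Finset.mem_filter, Finset.mem_sym2_iff]
    exact ⟨he.2, G.not_isDiag_of_mem_edgeSet (SimpleGraph.mem_edgeFinset.1 he.1)⟩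
  have hcardT : (S.sym2.filter (fun e => ¬ e.IsDiag)).card = C := by
    rw [aux_offdiag_card, hScard]
  have hm : (ein S).card ≤ C := hcardT ▸ Finset.card_le_card hsub
  rw [aux_altsum (ein S) C hCodd hm]
  -- characterize clique and anticlique
  have hanti : (∀ u ∈ S, ∀ v ∈ S, ¬ G.Adj u v) ↔ ein S = ∅ := by
    constructor
    · intro h
      rw [Finset.eq_empty_iff_forall_notMem]
      intro e he
      rw [hein, Finset.mem_filter] at he
      induction e with
      | _ u v =>
        have hadj : G.Adj u v := SimpleGraph.mem_edgeFinset.1 he.1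
        exact h u (he.2 u (by simp)) v (he.2 v (by simp)) hadj
    · intro h u hu v hv hadj
      have : s(u, v) ∈ ein S := by
        rw [hein, Finset.mem_filter]
        refine ⟨SimpleGraph.mem_edgeFinset.2 hadj, ?_⟩
        intro w hw
        rcases Sym2.mem_iff.1 hw with rfl | rfl <;> assumption
      rw [h] at this
      exact absurd this (Finset.notMem_empty _)
  have hclique : (∀ u ∈ S, ∀ v ∈ S, u ≠ v → G.Adj u v) ↔ (ein S).card = C := by
    constructor
    · intro h
      have : ein S = S.sym2.filter (fun e => ¬ e.IsDiag) := by
        apply Finset.Subset.antisymm hsub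
        intro e he
        rw [Finset.mem_filter, Finset.mem_sym2_iff] at he
        induction e with
        | _ u v =>
          have hne : u ≠ v := fun huv => he.2 (by simp [huv])
          have hadj : G.Adj u v := h u (he.1 u (by simp)) v (he.1 v (by simp)) hne
          rw [hein, Finset.mem_filter]
          exact ⟨SimpleGraph.mem_edgeFinset.2 hadj, he.1⟩
      rw [this, hcardT]
    · intro h u hu v hv huv
      have heq : ein S = S.sym2.filter (fun e => ¬ e.IsDiag) :=
        Finset.eq_of_subset_of_card_le hsub (by omega)
      have : s(u, v) ∈ ein S := by
        rw [heq, Finset.mem_filter, Finset.mem_sym2_iff]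
        constructor
        · intro w hw
          rcases Sym2.mem_iff.1 hw with rfl | rfl <;> assumption
        · simpa using huv
      rw [hein, Finset.mem_filter] at this
      exact SimpleGraph.mem_edgeFinset.1 this.1
  -- clique and anticlique are mutually exclusive
  have hdisj : ¬ ((∀ u ∈ S, ∀ v ∈ S, u ≠ v → G.Adj u v) ∧
      (∀ u ∈ S, ∀ v ∈ S, ¬ G.Adj u v)) := by
    rintro ⟨hc, ha⟩
    obtain ⟨u, hu, v, hv, huv⟩ := Finset.one_lt_card.1 (by omega : 1 < S.card)
    exact ha u hu v hv (hc u hu v hv huv)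
  by_cases hc : ∀ u ∈ S, ∀ v ∈ S, u ≠ v → G.Adj u v
  · have hna : ¬ ∀ u ∈ S, ∀ v ∈ S, ¬ G.Adj u v := fun ha => hdisj ⟨hc, ha⟩
    have h1 : ¬ ein S = ∅ := fun h => hna (hanti.2 h)
    rw [if_pos (Or.inl hc), if_neg h1, if_pos (hclique.1 hc)]
    norm_num
  · by_cases ha : ∀ u ∈ S, ∀ v ∈ S, ¬ G.Adj u v
    · have h1 : ein S = ∅ := hanti.1 ha
      have h2 : ¬ (ein S).card = C := by
        rw [h1, Finset.card_empty]
        omega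
      rw [if_pos (Or.inr ha), if_pos h1, if_neg h2]
      norm_num
    · have h1 : ¬ ein S = ∅ := fun h => ha (hanti.2 h)
      have h2 : ¬ (ein S).card = C := fun h => hc (hclique.2 h)
      have hor : ¬ ((∀ u ∈ S, ∀ v ∈ S, u ≠ v → G.Adj u v) ∨ ∀ u ∈ S, ∀ v ∈ S, ¬ G.Adj u v) :=
        fun h => h.elim hc ha
      rw [if_neg hor, if_neg h1, if_neg h2]
      norm_num
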